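/- arXiv:1701.08411 — 3 statements merged into one kernel-verified Lean document; each statement's English description precedes it below -/
import Mathlib

section
/- For each λ ∈ Λ, s,t ∈ T(λ) and i ∈ I one has e_i · c_{st}^λ · e_i = c_{st}^λ if both s,t ∈ T(λ,i), and e_i · c_{st}^λ · e_i = 0 otherwise. Consequently, the set C_i = {c_{st}^λ : s,t ∈ T(λ,i) for some λ ∈ Λ_i} is an F-basis of the F-algebra e_i A e_i (whose identity element is e_i). -/
open scoped Classical

noncomputable section


/-- A cellular algebra over a field `F`, in the sense of Graham–Lehrer: an associative unital
`F`-algebra `A` together with a finite poset `Λ`, finite nonempty index sets `T l`, a basis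
`c l s t` indexed by triples, an `F`-linear anti-automorphism `star` fixing the basis up to
transposition, and structure coefficients `r` satisfying the cellular multiplication rule
modulo the span `A^{>l}` of higher basis elements. -/
structure CellularAlgebra (F : Type*) [Field F] (A : Type*) [Ring A] [Algebra F A]
    (Λ : Type*) [PartialOrder Λ] [Fintype Λ]
    (T : Λ → Type*) [∀ l, Fintype (T l)] [∀ l, Nonempty (T l)] where
  c : (l : Λ) → T l → T l → A
  basis : Module.Basis ((l : Λ) × (T l × T l)) F A
  basis_eq : ∀ (l : Λ) (s t : T l), basis ⟨l, (s, t)⟩ = c l s t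
  star : A →ₗ[F] A
  star_mul : ∀ a b : A, star (a * b) = star b * star a
  star_star : ∀ a : A, star (star a) = a
  star_c : ∀ (l : Λ) (s t : T l), star (c l s t) = c l t s
  r : A → (l : Λ) → T l → T l → F
  cell_mem : ∀ (a : A) (l : Λ) (s t : T l),
    a * c l s t - ∑ u : T l, r a l u s • c l u t ∈
      Submodule.span F {x : A | ∃ μ : Λ, l < μ ∧ ∃ p q : T μ, x = c μ p q}

namespace CellularAlgebra

variable {F : Type*} [Field F] {A : Type*} [Ring A] [Algebra F A]
  {Λ : Type*} [PartialOrder Λ] [Fintype Λ]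
  {T : Λ → Type*} [∀ l, Fintype (T l)] [∀ l, Nonempty (T l)]
  (cd : CellularAlgebra F A Λ T)

/-- The ideal-like subspace `A^{>l}`, the `F`-span of all basis elements of strictly
higher degree. -/
def spanAbove (l : Λ) : Submodule F A :=
  Submodule.span F {x : A | ∃ μ : Λ, l < μ ∧ ∃ p q : T μ, x = cd.c μ p q}

variable {I : Type*} [Fintype I] (e : I → A)

/-- Assumptions (A1)–(A4): a decomposition of `1` into nonzero pairwise orthogonal
idempotents `e i`, fixed by `star`, such that each basis row is absorbed by some `e i`. -/
structure Decomp : Prop where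
  ne_zero : ∀ i, e i ≠ 0
  idem : ∀ i, e i * e i = e i
  orth : ∀ i j, i ≠ j → e i * e j = 0
  sum_eq_one : ∑ i, e i = 1
  star_fix : ∀ i, cd.star (e i) = e i
  exists_idx : ∀ (l : Λ) (t : T l), ∃ i : I, ∀ s : T l, e i * cd.c l t s = cd.c l t s

/-- `T(λ, i)`. -/
def Tset (i : I) (l : Λ) : Set (T l) :=
  {t : T l | ∀ s : T l, e i * cd.c l t s = cd.c l t s}

/-- `Λ_i`. -/
def LambdaSet (i : I) : Set Λ := {l : Λ | (cd.Tset e i l).Nonempty}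

/-- `I_λ`. -/
def Iset (l : Λ) : Set I := {i : I | l ∈ cd.LambdaSet e i}


/-- The corner subspace `e_i A e_i = {x | e i * x = x ∧ x * e i = x}` of `A`. -/
def corner (cA : CellularAlgebra F A Λ T) (e' : I → A) (i : I) : Submodule F A where
  carrier := {x : A | e' i * x = x ∧ x * e' i = x}
  add_mem' := fun ha hb => ⟨by rw [mul_add, ha.1, hb.1], by rw [add_mul, ha.2, hb.2]⟩
  zero_mem' := ⟨mul_zero _, zero_mul _⟩
  smul_mem' := fun r x hx => ⟨by rw [mul_smul_comm, hx.1], by rw [smul_mul_assoc, hx.2]⟩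

/-- `(e_i A e_i)^{>l}`: the span of the cellular basis elements of `e_i A e_i` of strictly
higher degree. -/
def cornerSpanAbove (i : I) (l : Λ) : Submodule F A :=
  Submodule.span F {x : A | ∃ μ : Λ, l < μ ∧
    ∃ p ∈ cd.Tset e i μ, ∃ q ∈ cd.Tset e i μ, x = cd.c μ p q}

/-- `e i * c_{st}^λ * e i` equals `c_{st}^λ` when `s, t ∈ T(λ,i)` and `0`
otherwise; consequently `C_i = {c_{st}^λ : s, t ∈ T(λ,i), λ ∈ Λ_i}` is an `F`-basis of the
corner algebra `e_i A e_i` (whose identity element is `e i`). -/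
theorem statement_2 (hd : cd.Decomp e) (i : I) :
    (∀ (l : Λ) (s t : T l),
      (s ∈ cd.Tset e i l ∧ t ∈ cd.Tset e i l → e i * cd.c l s t * e i = cd.c l s t) ∧
      (¬ (s ∈ cd.Tset e i l ∧ t ∈ cd.Tset e i l) → e i * cd.c l s t * e i = 0)) ∧
    e i ∈ cd.corner e i ∧
    (∀ x ∈ cd.corner e i, e i * x = x ∧ x * e i = x) ∧
    LinearIndependent F
      (fun p : {p : (l : Λ) × (T l × T l) //
          p.2.1 ∈ cd.Tset e i p.1 ∧ p.2.2 ∈ cd.Tset e i p.1} =>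
        cd.c p.1.1 p.1.2.1 p.1.2.2) ∧
    Submodule.span F
      (Set.range (fun p : {p : (l : Λ) × (T l × T l) //
          p.2.1 ∈ cd.Tset e i p.1 ∧ p.2.2 ∈ cd.Tset e i p.1} =>
        cd.c p.1.1 p.1.2.1 p.1.2.2)) = cd.corner e i := by
  have hleft : ∀ (l : Λ) (s t : T l), s ∈ cd.Tset e i l → e i * cd.c l s t = cd.c l s t :=
    fun l s t hs => hs t
  have hleft0 : ∀ (l : Λ) (s t : T l), s ∉ cd.Tset e i l → e i * cd.c l s t = 0 := by
    intro l s t hs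
    obtain ⟨j, hj⟩ := hd.exists_idx l s
    have hji : j ≠ i := by rintro rfl; exact hs hj
    calc e i * cd.c l s t = e i * (e j * cd.c l s t) := by rw [hj t]
      _ = (e i * e j) * cd.c l s t := by rw [mul_assoc]
      _ = 0 := by rw [hd.orth i j (Ne.symm hji), zero_mul]
  have hstar : ∀ (l : Λ) (s t : T l), cd.c l s t * e i = cd.star (e i * cd.c l t s) := by
    intro l s t
    rw [cd.star_mul, cd.star_c, hd.star_fix]
  have hright : ∀ (l : Λ) (s t : T l), t ∈ cd.Tset e i l → cd.c l s t * e i = cd.c l s t := by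
    intro l s t ht
    rw [hstar, hleft l t s ht, cd.star_c]
  have hright0 : ∀ (l : Λ) (s t : T l), t ∉ cd.Tset e i l → cd.c l s t * e i = 0 := by
    intro l s t ht
    rw [hstar, hleft0 l t s ht, map_zero]
  have h1 : ∀ (l : Λ) (s t : T l),
      (s ∈ cd.Tset e i l ∧ t ∈ cd.Tset e i l → e i * cd.c l s t * e i = cd.c l s t) ∧
      (¬ (s ∈ cd.Tset e i l ∧ t ∈ cd.Tset e i l) → e i * cd.c l s t * e i = 0) := by
    intro l s t
    constructor
    · rintro ⟨hs, ht⟩; rw [hleft l s t hs, hright l s t ht]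
    · intro h
      by_cases hs : s ∈ cd.Tset e i l
      · have ht : t ∉ cd.Tset e i l := fun ht => h ⟨hs, ht⟩
        rw [hleft l s t hs, hright0 l s t ht]
      · rw [hleft0 l s t hs, zero_mul]
  refine ⟨h1, ⟨hd.idem i, hd.idem i⟩, fun x hx => hx, ?_, ?_⟩
  · have hli := cd.basis.linearIndependent.comp
      (Subtype.val (p := fun p : (l : Λ) × (T l × T l) =>
        p.2.1 ∈ cd.Tset e i p.1 ∧ p.2.2 ∈ cd.Tset e i p.1)) Subtype.val_injective
    have h2 : (fun p : {p : (l : Λ) × (T l × T l) //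
          p.2.1 ∈ cd.Tset e i p.1 ∧ p.2.2 ∈ cd.Tset e i p.1} => cd.basis p.val) =
        fun p => cd.c p.1.1 p.1.2.1 p.1.2.2 := by
      funext p
      exact cd.basis_eq p.1.1 p.1.2.1 p.1.2.2
    exact h2 ▸ hli
  · apply le_antisymm
    · rw [Submodule.span_le]
      rintro x ⟨⟨⟨l, s, t⟩, hs, ht⟩, rfl⟩
      exact ⟨hleft l s t hs, hright l s t ht⟩
    · intro x hx
      have hx1 : e i * x * e i = x := by rw [hx.1, hx.2]
      have hmem : x ∈ Submodule.span F (Set.range cd.basis) := by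
        rw [cd.basis.span_eq]; exact Submodule.mem_top
      have key : ∀ y ∈ Submodule.span F (Set.range cd.basis),
          e i * y * e i ∈ Submodule.span F
            (Set.range (fun p : {p : (l : Λ) × (T l × T l) //
                p.2.1 ∈ cd.Tset e i p.1 ∧ p.2.2 ∈ cd.Tset e i p.1} =>
              cd.c p.1.1 p.1.2.1 p.1.2.2)) := by
        intro y hy
        induction hy using Submodule.span_induction with
        | mem z hz =>
          obtain ⟨⟨l, s, t⟩, rfl⟩ := hz
          rw [cd.basis_eq]
          by_cases hst : s ∈ cd.Tset e i l ∧ t ∈ cd.Tset e i l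
          · rw [(h1 l s t).1 hst]
            exact Submodule.subset_span ⟨⟨⟨l, (s, t)⟩, hst⟩, rfl⟩
          · rw [(h1 l s t).2 hst]
            exact Submodule.zero_mem _
        | zero => simpa using Submodule.zero_mem _
        | add a b _ _ ha hb =>
          have : e i * (a + b) * e i = e i * a * e i + e i * b * e i := by
            rw [mul_add, add_mul]
          rw [this]; exact Submodule.add_mem _ ha hb
        | smul r a _ ha =>
          have : e i * (r • a) * e i = r • (e i * a * e i) := by
            rw [mul_smul_comm, smul_mul_assoc]
          rw [this]; exact Submodule.smul_mem _ r ha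
      exact hx1 ▸ key x hmem

end CellularAlgebra
end
end

section
/- For each i ∈ I, the algebra e_i A e_i is a cellular algebra over F with cellular basis C_i = {c_{st}^λ : s,t ∈ T(λ,i) for some λ ∈ Λ_i}, poset Λ_i (with the order inherited from Λ), and index sets T(λ,i) for λ ∈ Λ_i. Explicitly: (1) the F-linear map sending c_{st}^λ ↦ c_{ts}^λ for c_{st}^λ ∈ C_i is an algebra anti-automorphism of e_i A e_i; (2) for every a ∈ e_i A e_i and c_{st}^λ ∈ C_i one has a·c_{st}^λ ≡ Σ_{u∈T(λ,i)} r_a(u,s)·c_{ut}^λ mod (e_i A e_i)^{>λ}, where (e_i A e_i)^{>λ} is the F-span of {c_{uv}^{λ'} : u,v ∈ T(λ',i) for some λ' ∈ Λ_i with λ' > λ} and the coefficients r_a(u,s) do not depend on t ∈ T(λ,i). -/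
open scoped Classical

noncomputable section


namespace CellularAlgebra

variable {F : Type*} [Field F] {A : Type*} [Ring A] [Algebra F A]
  {Λ : Type*} [PartialOrder Λ] [Fintype Λ]
  {T : Λ → Type*} [∀ l, Fintype (T l)] [∀ l, Nonempty (T l)]
  (cd : CellularAlgebra F A Λ T)

variable {I : Type*} [Fintype I] (e : I → A)

lemma e_mul_c (hd : cd.Decomp e) (i : I) (l : Λ) (u t : T l) :
    e i * cd.c l u t = if u ∈ cd.Tset e i l then cd.c l u t else 0 := by
  by_cases h : u ∈ cd.Tset e i l
  · simpa [h] using h t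
  · obtain ⟨j, hj⟩ := hd.exists_idx l u
    have hji : j ≠ i := by
      intro h'
      exact h (by subst h'; exact hj)
    calc e i * cd.c l u t = e i * (e j * cd.c l u t) := by rw [hj t]
      _ = (e i * e j) * cd.c l u t := by rw [mul_assoc]
      _ = 0 := by rw [hd.orth i j (Ne.symm hji), zero_mul]
      _ = if u ∈ cd.Tset e i l then cd.c l u t else 0 := by simp [h]

lemma c_mul_e (hd : cd.Decomp e) (i : I) (l : Λ) (u t : T l) :
    cd.c l u t * e i = if t ∈ cd.Tset e i l then cd.c l u t else 0 := by
  have h1 := cd.e_mul_c e hd i l t u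
  have h2 := congrArg cd.star h1
  rw [cd.star_mul, hd.star_fix, cd.star_c] at h2
  by_cases h : t ∈ cd.Tset e i l
  · rw [if_pos h] at h2
    rw [cd.star_c] at h2
    simp [h, h2]
  · rw [if_neg h] at h2
    rw [map_zero] at h2
    simp [h, h2]

lemma corner_span_lemma (hd : cd.Decomp e) (i : I) (l : Λ) :
    ∀ x ∈ cd.spanAbove l, e i * x * e i ∈ cd.cornerSpanAbove e i l := by
  intro x hx
  induction hx using Submodule.span_induction with
  | mem y hy =>
    obtain ⟨μ, hμ, p, q, rfl⟩ := hy
    rw [cd.e_mul_c e hd i μ p q]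
    by_cases hp : p ∈ cd.Tset e i μ
    · rw [if_pos hp, cd.c_mul_e e hd i μ p q]
      by_cases hq : q ∈ cd.Tset e i μ
      · rw [if_pos hq]
        exact Submodule.subset_span ⟨μ, hμ, p, hp, q, hq, rfl⟩
      · rw [if_neg hq]; exact Submodule.zero_mem _
    · rw [if_neg hp, zero_mul]; exact Submodule.zero_mem _
  | zero => simpa using Submodule.zero_mem _
  | add y z _ _ hy hz =>
    have : e i * (y + z) * e i = e i * y * e i + e i * z * e i := by rw [mul_add, add_mul]
    rw [this]; exact Submodule.add_mem _ hy hz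
  | smul r y _ hy =>
    have : e i * (r • y) * e i = r • (e i * y * e i) := by
      rw [mul_smul_comm, smul_mul_assoc]
    rw [this]; exact Submodule.smul_mem _ _ hy

/-- the corner algebra `e_i A e_i` is cellular with cellular basis `C_i`,
poset `Λ_i` and index sets `T(λ,i)`: the basis elements `c_{st}^λ` with `s,t ∈ T(λ,i)` lie
in `e_i A e_i`; the involution `*` (which sends `c_{st}^λ ↦ c_{ts}^λ`) restricts to an
anti-automorphism of `e_i A e_i`; and the cellular multiplication rule holds in
`e_i A e_i` modulo `(e_i A e_i)^{>λ}`, with the same structure coefficients `r`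
(independent of `t ∈ T(λ,i)`). -/
theorem statement_3 (hd : cd.Decomp e) (i : I) :
    (∀ (l : Λ) (s t : T l), s ∈ cd.Tset e i l → t ∈ cd.Tset e i l →
        cd.c l s t ∈ cd.corner e i) ∧
    (∀ x ∈ cd.corner e i, cd.star x ∈ cd.corner e i) ∧
    (∀ a ∈ cd.corner e i, ∀ (l : Λ), l ∈ cd.LambdaSet e i →
      ∀ (s t : T l), s ∈ cd.Tset e i l → t ∈ cd.Tset e i l →
      a * cd.c l s t - ∑ u ∈ Finset.univ.filter (fun u => u ∈ cd.Tset e i l),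
          cd.r a l u s • cd.c l u t ∈ cd.cornerSpanAbove e i l) := by
  refine ⟨?_, ?_, ?_⟩
  · intro l s t hs ht
    refine ⟨hs t, ?_⟩
    rw [cd.c_mul_e e hd i l s t, if_pos ht]
  · intro x hx
    constructor
    · have := congrArg cd.star hx.2
      rw [cd.star_mul, hd.star_fix] at this
      exact this
    · have := congrArg cd.star hx.1
      rw [cd.star_mul, hd.star_fix] at this
      exact this
  · intro a ha l _ s t hs ht
    have hx := cd.cell_mem a l s t
    have hmem := cd.corner_span_lemma e hd i l _ hx
    have key : e i * (a * cd.c l s t - ∑ u : T l, cd.r a l u s • cd.c l u t) * e i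
        = a * cd.c l s t - ∑ u ∈ Finset.univ.filter (fun u => u ∈ cd.Tset e i l),
          cd.r a l u s • cd.c l u t := by
      rw [mul_sub, sub_mul, Finset.mul_sum, Finset.sum_mul]
      congr 1
      · rw [← mul_assoc, ha.1, mul_assoc, cd.c_mul_e e hd i l s t, if_pos ht]
      · rw [Finset.sum_filter]
        refine Finset.sum_congr rfl fun u _ => ?_
        rw [mul_smul_comm, smul_mul_assoc, cd.e_mul_c e hd i l u t]
        by_cases hu : u ∈ cd.Tset e i l
        · rw [if_pos hu, if_pos hu, cd.c_mul_e e hd i l u t, if_pos ht]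
        · rw [if_neg hu, if_neg hu, zero_mul, smul_zero]
    rw [key] at hmem
    exact hmem

end CellularAlgebra
end
end

section
/- For each i ∈ I, the idempotent e_i lies in the F-span of the set {c_{st}^λ : λ ∈ Λ, s,t ∈ T(λ,i)}; moreover Λ_i ≠ ∅ for each i ∈ I. -/
open scoped Classical

noncomputable section


namespace CellularAlgebra

variable {F : Type*} [Field F] {A : Type*} [Ring A] [Algebra F A]
  {Λ : Type*} [PartialOrder Λ] [Fintype Λ]
  {T : Λ → Type*} [∀ l, Fintype (T l)] [∀ l, Nonempty (T l)]
  (cd : CellularAlgebra F A Λ T)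

variable {I : Type*} [Fintype I] (e : I → A)

/-- each idempotent `e i` lies in the span of the basis elements
`c_{st}^λ` with `s, t ∈ T(λ, i)`; moreover `Λ_i` is nonempty. -/
theorem statement_5 (hd : cd.Decomp e) (i : I) :
    e i ∈ Submodule.span F {x : A | ∃ (l : Λ) (s t : T l),
        s ∈ cd.Tset e i l ∧ t ∈ cd.Tset e i l ∧ x = cd.c l s t} ∧
    (cd.LambdaSet e i).Nonempty := by
  classical
  set b := cd.basis with hb
  set φ : ((l : Λ) × (T l × T l)) → F := b.equivFun (e i) with hφ
  -- Key multiplication fact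
  have key : ∀ (l : Λ) (s t : T l), e i * cd.c l s t =
      if s ∈ cd.Tset e i l then cd.c l s t else 0 := by
    intro l s t
    by_cases hs : s ∈ cd.Tset e i l
    · rw [if_pos hs, hs t]
    · obtain ⟨j, hj⟩ := hd.exists_idx l s
      have hji : j ≠ i := fun h => hs (fun u => by rw [← h]; exact hj u)
      rw [if_neg hs, ← hj t, ← mul_assoc, hd.orth i j (Ne.symm hji), zero_mul]
  have hsum : e i = ∑ p : (l : Λ) × (T l × T l), φ p • b p :=
    (b.sum_equivFun (e i)).symm
  -- s-coordinate claim via idempotency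
  have hrepr : ∀ g : ((l : Λ) × (T l × T l)) → F,
      e i = ∑ p, g p • b p → φ = g := by
    intro g hg
    have : b.equivFun.symm φ = b.equivFun.symm g := by
      rw [Module.Basis.equivFun_symm_apply, Module.Basis.equivFun_symm_apply, ← hsum, ← hg]
    exact b.equivFun.symm.injective this
  have hleft : φ = fun q => if q.2.1 ∈ cd.Tset e i q.1 then φ q else 0 := by
    apply hrepr
    calc e i = e i * e i := (hd.idem i).symm
      _ = e i * ∑ p, φ p • b p := by rw [← hsum]
      _ = ∑ p, φ p • (e i * b p) := by
          rw [Finset.mul_sum]; exact Finset.sum_congr rfl fun p _ => (mul_smul_comm _ _ _)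
      _ = ∑ p, (if p.2.1 ∈ cd.Tset e i p.1 then φ p else 0) • b p := by
          refine Finset.sum_congr rfl fun p _ => ?_
          obtain ⟨l, s, t⟩ := p
          rw [cd.basis_eq, key]
          by_cases hs : s ∈ cd.Tset e i l <;> simp [hs, cd.basis_eq]
  have hs_mem : ∀ q : (l : Λ) × (T l × T l), φ q ≠ 0 → q.2.1 ∈ cd.Tset e i q.1 := by
    intro q hq
    by_contra h
    have := congrFun hleft q
    simp only [if_neg h] at this
    exact hq this
  -- symmetry via star
  let σ : ((l : Λ) × (T l × T l)) ≃ ((l : Λ) × (T l × T l)) :=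
    ⟨fun p => ⟨p.1, (p.2.2, p.2.1)⟩, fun p => ⟨p.1, (p.2.2, p.2.1)⟩,
      fun p => rfl, fun p => rfl⟩
  have hstar : φ = fun q => φ (σ q) := by
    apply hrepr
    calc e i = cd.star (e i) := (hd.star_fix i).symm
      _ = ∑ p, φ p • cd.star (b p) := by
          rw [hsum, map_sum]
          exact Finset.sum_congr rfl fun p _ => by rw [map_smul]
      _ = ∑ p, φ p • b (σ p) := by
          refine Finset.sum_congr rfl fun p _ => ?_
          obtain ⟨l, s, t⟩ := p
          rw [cd.basis_eq, cd.star_c, cd.basis_eq]; rfl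
      _ = ∑ q, φ (σ q) • b q := by
          rw [← Equiv.sum_comp σ (fun q => φ (σ q) • b q)]
          exact Finset.sum_congr rfl fun p _ => by simp [σ]
  have ht_mem : ∀ q : (l : Λ) × (T l × T l), φ q ≠ 0 → q.2.2 ∈ cd.Tset e i q.1 := by
    intro q hq
    have hσ : φ (σ q) ≠ 0 := by rw [← congrFun hstar q]; exact hq
    exact hs_mem (σ q) hσ
  constructor
  · rw [hsum]
    refine Submodule.sum_mem _ fun p _ => ?_
    by_cases hp : φ p = 0
    · rw [hp, zero_smul]; exact Submodule.zero_mem _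
    · refine Submodule.smul_mem _ _ (Submodule.subset_span ?_)
      obtain ⟨l, s, t⟩ := p
      exact ⟨l, s, t, hs_mem ⟨l, (s, t)⟩ hp, ht_mem ⟨l, (s, t)⟩ hp, cd.basis_eq l s t⟩
  · have hne : φ ≠ 0 := by
      intro h
      apply hd.ne_zero i
      have : b.equivFun (e i) = b.equivFun 0 := by rw [← hφ, h, map_zero]
      exact b.equivFun.injective this
    obtain ⟨q, hq⟩ := Function.ne_iff.mp hne
    exact ⟨q.1, q.2.1, hs_mem q hq⟩

end CellularAlgebra
end
end
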